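/- Let γ be a word in {NE,D}^* and φ(γ) = (γ_0,...,γ_b) with b = bounce(γ). Then for all 0 ≤ i < b: area(γ_{i+1}) = area(γ_i) + 1, bounce(γ_{i+1}) = bounce(γ_i) - 1, area(γ_i) = bounce(γ_{b-i}), and bounce(γ_i) = area(γ_{b-i}). -/

import Mathlib

open scoped Classical

inductive Step : Type
  | N | E | D
deriving DecidableEq, Repr

instance : Fintype Step :=
  ⟨{Step.N, Step.E, Step.D}, by intro x; cases x <;> simp⟩

open Step

/-- number of occurrences of the letter `s` in the word `w` -/
def cnt (s : Step) (w : List Step) : ℕ := w.count s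

/-- Schröder (or Dyck, if no `D`s) path in an `n × n` grid: every prefix has at
least as many `N`s as `E`s, and the totals agree. -/
def IsSchroeder (w : List Step) : Prop :=
  (∀ p : List Step, p <+: w → cnt E p ≤ cnt N p) ∧ cnt N w = cnt E w

/-- words that are concatenations of blocks `NE` and `D` -/
inductive IsNED : List Step → Prop
  | nil : IsNED []
  | ne {w} : IsNED w → IsNED (N :: E :: w)
  | d {w} : IsNED w → IsNED (D :: w)

/-- area of a Schröder path: the number of lower triangles between the path and the
main diagonal, computed as the sum over `N` and `D` steps of the height
`#N - #E` of the starting point of the step above the diagonal. -/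
def areaAux : ℕ → List Step → ℕ
  | _, [] => 0
  | h, N :: w => h + areaAux (h+1) w
  | h, D :: w => h + areaAux h w
  | h, E :: w => areaAux (h-1) w

def area (w : List Step) : ℕ := areaAux 0 w

/-- area of an `N/E` lattice path in a rectangular grid: the number of boxes under
the path, i.e. the sum over `E` steps of the number of `N` steps before it. -/
def areaNEAux : ℕ → List Step → ℕ
  | _, [] => 0
  | h, N :: w => areaNEAux (h+1) w
  | h, E :: w => h + areaNEAux h w
  | h, D :: w => areaNEAux h w

def areaNE (w : List Step) : ℕ := areaNEAux 0 w

/-- number of `N`s occurring before the `(j+1)`-st `E` (`j` is 0-indexed);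
this is the height of the path above the horizontal interval `[j, j+1]`. -/
def nBefore : List Step → ℕ → ℕ
  | [], _ => 0
  | N :: w, j => 1 + nBefore w j
  | E :: w, j => if j = 0 then 0 else nBefore w (j-1)
  | D :: w, j => nBefore w j

/-- number of `E`s occurring before the `(i+1)`-st `N` (`i` is 0-indexed). -/
def eBefore : List Step → ℕ → ℕ
  | [], _ => 0
  | E :: w, i => 1 + eBefore w i
  | N :: w, i => if i = 0 then 0 else eBefore w (i-1)
  | D :: w, i => eBefore w i

/-- number of `D`s occurring after the `e`-th `E` (`e` is 1-indexed). -/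
def dAfterE : List Step → ℕ → ℕ
  | [], _ => 0
  | E :: w, e => if e ≤ 1 then cnt D w else dAfterE w (e-1)
  | D :: w, e => dAfterE w e
  | N :: w, e => dAfterE w e

/-- Combined computation of `bounce(Γ(γ)) + numph(γ)` along the bounce path of
`Γ(γ)`.  Here `g` is the Schröder path, `w = Γ(g)` is the underlying Dyck path,
`nn` its size; the bounce path has corners (peaks) at the positions
`j₀ = 0, jₖ₊₁ = nBefore w jₖ`; each intermediate return `jₖ₊₁ < nn` contributes
`nn - jₖ₊₁` to the bounce of `Γ(g)`, and the peak with corner at `jₖ` is the start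
of the `(jₖ+1)`-st east step, contributing to numph the number of diagonal steps of
`g` above it, i.e. after that east step. -/
def bounceAux (g w : List Step) (nn : ℕ) : ℕ → ℕ → ℕ
  | 0, _ => 0
  | fuel+1, j =>
      dAfterE g (j+1) +
        (if nn ≤ nBefore w j ∨ nBefore w j ≤ j then 0
         else (nn - nBefore w j) + bounceAux g w nn fuel (nBefore w j))

/-- the bounce statistic of a Schröder path: `bounce(Γ(γ)) + numph(γ)` -/
def bounce (g : List Step) : ℕ :=
  let w := g.filter (fun s => s ≠ D)
  let nn := cnt E w
  if nn = 0 then 0 else bounceAux g w nn g.length 0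

/-- the (signed) area coordinate `a_i = m·i - (#E before the (i+1)-st N)` of line `i`
(0-indexed) for a path in an `n × mn` grid. -/
def aLine (m : ℕ) (g : List Step) (i : ℕ) : ℤ := (m : ℤ) * i - eBefore g i

/-- an `(n, mn)`-Dyck path: `n` north steps, `mn` east steps, no diagonal steps,
staying weakly above the main diagonal. -/
def IsParkingPath (n m : ℕ) (g : List Step) : Prop :=
  (∀ s ∈ g, s ≠ D) ∧ cnt N g = n ∧ cnt E g = m * n ∧
    ∀ p : List Step, p <+: g → cnt E p ≤ m * cnt N p

/-- an `(n, mn)`-parking function: an `(n,mn)`-Dyck path labelled by a permutation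
`w` of `{0, …, n-1}` whose labels increase within each column. -/
def IsParking (n m : ℕ) (g : List Step) (w : Fin n → Fin n) : Prop :=
  IsParkingPath n m g ∧ Function.Bijective w ∧
    ∀ i j : Fin n, (j : ℕ) = (i : ℕ) + 1 → eBefore g (i : ℕ) = eBefore g (j : ℕ) → w i < w j

/-- the diagonal inversion statistic of an `(n, mn)`-parking function -/
def dinv (n m : ℕ) (g : List Step) (w : Fin n → Fin n) : ℤ :=
  ∑ i : Fin n, ∑ j : Fin n,
    if (i : ℕ) < (j : ℕ) then
      (if w i < w j then max 0 ((m : ℤ) - |aLine m g (i : ℕ) - aLine m g (j : ℕ)|) else 0) +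
        (if w j < w i then max 0 ((m : ℤ) - |aLine m g (j : ℕ) - aLine m g (i : ℕ) + 1|) else 0)
    else 0

/-- the number of descents of the word `w` -/
def desNum (n : ℕ) (w : Fin n → Fin n) : ℕ :=
  ((Finset.range (n-1)).filter fun i =>
    ∃ hj : i + 1 < n, w ⟨i+1, hj⟩ < w ⟨i, Nat.lt_of_succ_lt hj⟩).card

/-- the major index of the word `w` (with positions 1-indexed as usual) -/
def majStat (n : ℕ) (w : Fin n → Fin n) : ℕ :=
  ∑ i ∈ (Finset.range (n-1)).filter (fun i =>
    ∃ hj : i + 1 < n, w ⟨i+1, hj⟩ < w ⟨i, Nat.lt_of_succ_lt hj⟩), (i+1)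

/-- the reading word of a labelled path in an `n × mn` grid: labels are read along
diagonals parallel to the main diagonal, starting with the farthest diagonal,
each diagonal being read from top-right to bottom-left. -/
def readWord (n m : ℕ) (g : List Step) (lab : ℕ → ℕ) : List ℕ :=
  ((List.range (m * n + 1)).map fun k =>
    (((List.range n).reverse.filter fun i => aLine m g i = (m * n : ℤ) - k).map lab)).flatten

/-- the labelling function `ℕ → ℕ` associated to a permutation of `Fin n` -/
def labOf {n : ℕ} (w : Fin n → Fin n) : ℕ → ℕ :=
  fun i => if h : i < n then (w ⟨i, h⟩ : ℕ) else 0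

/-- one step of the algorithm `φ`, on the reversed word: find the rightmost
(i.e. first in the reversed word) east step not followed by an east step,
and swap it with the letter following it. -/
def phiRevAux : List Step → List Step
  | a :: E :: t => if a ≠ E then E :: a :: t else a :: phiRevAux (E :: t)
  | a :: t => a :: phiRevAux t
  | [] => []

/-- one step of the algorithm `φ` -/
def phiStep (w : List Step) : List Step := (phiRevAux w.reverse).reverse

/-- the sequence `φ(γ) = (γ₀, γ₁, …, γ_{bounce γ})` produced by the algorithm -/
def phiSeq (g : List Step) : List (List Step) :=
  (List.range (bounce g + 1)).map fun i => phiStep^[i] g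

/-- the union of all sequences `φ(γ)` over area-0 Schröder paths with `n` blocks -/
def phiUniv (n : ℕ) : Set (List Step) :=
  {p | ∃ g, IsNED g ∧ cnt N g + cnt D g = n ∧ p ∈ phiSeq g}

/-- the map replacing each block `NE` by `N` and each `D` by `E` -/
def theta : List Step → List Step
  | N :: E :: w => N :: theta w
  | D :: w => E :: theta w
  | _ :: w => theta w
  | [] => []

/-- the cells of the hook-shaped Young diagram `(d, 1^{n-d})` (row 0 is the arm). -/
def hookCells (n d : ℕ) : Finset (ℕ × ℕ) :=
  ((Finset.range d).image fun c => ((0 : ℕ), c)) ∪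
    ((Finset.range (n - d + 1)).image fun r => (r, (0 : ℕ)))

/-- a standard Young tableau of hook shape `(d, 1^{n-d})`: `pos i` is the cell
`(row, column)` containing the entry `i+1`; entries increase along rows and columns. -/
structure HookSYT (n d : ℕ) where
  pos : Fin n → ℕ × ℕ
  mem : ∀ i, pos i ∈ hookCells n d
  inj : Function.Injective pos
  rowInc : ∀ i j : Fin n, (pos i).1 = (pos j).1 → (pos i).2 < (pos j).2 → i < j
  colInc : ∀ i j : Fin n, (pos i).2 = (pos j).2 → (pos i).1 < (pos j).1 → i < j

/-- the descent set of a standard Young tableau: entries `i ∈ {1, …, n-1}` such that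
the entry `i+1` lies in a strictly higher row than `i`. -/
def Des {n d : ℕ} (τ : HookSYT n d) : Finset ℕ :=
  (Finset.Icc 1 (n-1)).filter fun i =>
    ∃ hi : i < n, ∃ hi' : i - 1 < n, (τ.pos ⟨i - 1, hi'⟩).1 < (τ.pos ⟨i, hi⟩).1

/-- the major index of a standard Young tableau -/
def majT {n d : ℕ} (τ : HookSYT n d) : ℕ := ∑ i ∈ Des τ, i

/-- the number of descents of a standard Young tableau -/
def desT {n d : ℕ} (τ : HookSYT n d) : ℕ := (Des τ).card

/-- the maximum of the descent set -/
def maxDes {n d : ℕ} (τ : HookSYT n d) : ℕ := (Des τ).sup id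

/-- the map `M_{n,d}`: the path `γ₁γ₂⋯γₙ` with `γₙ = NE`, `γ_{n-i} = NE` if
`i ∈ Des τ` and `γ_{n-i} = D` otherwise -/
def Mmap (n d : ℕ) (τ : HookSYT n d) : List Step :=
  (((List.range n).map fun j =>
    if j = n - 1 then [N, E]
    else if (n - 1 - j) ∈ Des τ then [N, E] else [D])).flatten

/-- the map `S_{n,d}`: the path `γ₁⋯γ_{n-1}` with `γ_{n-i} = NNEE` if
`i = max Des τ` and `1 ∈ Des τ`, `γ_{n-i} = NDE` if `i = max Des τ` and
`1 ∉ Des τ`, `γ_{n-i} = NE` if `i = 1` or `i ∈ Des τ ∖ {max Des τ}`, and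
`γ_{n-i} = D` otherwise. -/
def Smap (n d : ℕ) (τ : HookSYT n d) : List Step :=
  (((List.range (n-1)).map fun j =>
    if (n - 1 - j) = maxDes τ then (if 1 ∈ Des τ then [N,N,E,E] else [N,D,E])
    else if (n - 1 - j) = 1 ∨ (n - 1 - j) ∈ Des τ then [N,E] else [D])).flatten

/-- the set `V_{n,d}` of Schröder paths of the form `Dʲ NNEE u` or `Dʲ NDE u`
with `u ∈ {NE,D}* NE`, having `n-d+1` north steps and `d-1` diagonal steps. -/
def Vset (n d : ℕ) : Set (List Step) :=
  {g | (∃ j u, IsNED u ∧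
      (g = List.replicate j D ++ [N,N,E,E] ++ (u ++ [N,E]) ∨
       g = List.replicate j D ++ [N,D,E] ++ (u ++ [N,E]))) ∧
     cnt N g = n - d + 1 ∧ cnt D g = d - 1}

/-- Schröder paths in an `n × n` grid with `dd` diagonal steps, area `a`,
ending with `NE` -/
def SchT (n dd a : ℕ) : Set (List Step) :=
  {g | IsSchroeder g ∧ cnt D g = dd ∧ cnt N g = n - dd ∧ area g = a ∧ ∃ u, g = u ++ [N, E]}

/-- the 'upper' forms: `Dʲ NNEE γ' NE NE` or `γ' NE Dʲ NNEE γ''` -/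
def UpperForm (g : List Step) : Prop :=
  (∃ j u, IsNED u ∧ g = List.replicate j D ++ [N,N,E,E] ++ u ++ [N,E,N,E]) ∨
  (∃ u j v, IsNED u ∧ g = u ++ [N,E] ++ List.replicate j D ++ [N,N,E,E] ++ v)

/-- the 'lower' forms: `Dʲ NNEE γ' D NE` or `γ' NDE Dʲ NE γ''` -/
def LowerForm (g : List Step) : Prop :=
  (∃ j u, IsNED u ∧ g = List.replicate j D ++ [N,N,E,E] ++ u ++ [D,N,E]) ∨
  (∃ u j v, IsNED u ∧ g = u ++ [N,D,E] ++ List.replicate j D ++ [N,E] ++ v)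

/-- the number of distinct columns of the path -/
def Tcols (n : ℕ) (g : List Step) : ℕ :=
  ((Finset.range n).image fun i => eBefore g i).card

/-- the `q`-integer `[k]_q = 1 + q + ⋯ + q^{k-1}` as a polynomial -/
noncomputable def qInt (k : ℕ) : Polynomial ℤ := ∑ i ∈ Finset.range k, Polynomial.X ^ i

/-- the `q`-factorial `[k]!_q` -/
noncomputable def qFact (k : ℕ) : Polynomial ℤ := ∏ i ∈ Finset.range k, qInt (i+1)

namespace Stmt6Aux
open List

def noE (m : List Step) : Prop := ∀ s ∈ m, s ≠ E

lemma cnt_cons (s a : Step) (w : List Step) :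
    cnt s (a :: w) = cnt s w + if a = s then 1 else 0 := by
  simp [cnt, List.count_cons]

lemma cnt_append (s : Step) (u v : List Step) : cnt s (u ++ v) = cnt s u + cnt s v := by
  simp [cnt]

lemma cnt_rep (s t : Step) (r : ℕ) :
    cnt s (List.replicate r t) = if t = s then r else 0 := by
  induction r with
  | zero => simp [cnt]
  | succ r ih =>
      rw [List.replicate_succ, cnt_cons, ih]
      by_cases h : t = s <;> simp [h, eq_comm]

lemma length_noE {m : List Step} (hm : noE m) : m.length = cnt N m + cnt D m := by
  induction m with
  | nil => simp [cnt]
  | cons a m ih =>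
      have ha := hm a (by simp)
      have h' : noE m := fun s hs => hm s (by simp [hs])
      rw [List.length_cons, cnt_cons, cnt_cons, ih h']
      cases a <;> simp at ha ⊢ <;> omega

/-! ### dAfterE -/

lemma dAfterE_N (w : List Step) (e : ℕ) : dAfterE (N::w) e = dAfterE w e := rfl
lemma dAfterE_D (w : List Step) (e : ℕ) : dAfterE (D::w) e = dAfterE w e := rfl
lemma dAfterE_E_one (w : List Step) : dAfterE (E::w) 1 = cnt D w := by simp [dAfterE, cnt]
lemma dAfterE_E_succ (w : List Step) (e : ℕ) : dAfterE (E::w) (e+2) = dAfterE w (e+1) := by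
  simp [dAfterE]

lemma dAfterE_append_noE {m : List Step} (hm : noE m) (z : List Step) (e : ℕ) :
    dAfterE (m ++ z) e = dAfterE z e := by
  induction m with
  | nil => rfl
  | cons a m ih =>
      have ha := hm a (by simp)
      have h' : noE m := fun s hs => hm s (by simp [hs])
      cases a
      · rw [List.cons_append, dAfterE_N, ih h']
      · exact absurd rfl ha
      · rw [List.cons_append, dAfterE_D, ih h']

lemma dAfterE_repE (r : ℕ) : ∀ e, dAfterE (List.replicate r E) e = 0 := by
  induction r with
  | zero => intro e; rfl
  | succ r ih =>
      intro e
      rw [List.replicate_succ]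
      show (if e ≤ 1 then cnt D (List.replicate r E) else dAfterE (List.replicate r E) (e-1)) = 0
      rw [cnt_rep]
      simp [ih]

/-! ### nBefore -/

lemma nBefore_N (w : List Step) (j : ℕ) : nBefore (N::w) j = 1 + nBefore w j := rfl
lemma nBefore_D (w : List Step) (j : ℕ) : nBefore (D::w) j = nBefore w j := rfl
lemma nBefore_E_zero (w : List Step) : nBefore (E::w) 0 = 0 := by simp [nBefore]
lemma nBefore_E_succ (w : List Step) (j : ℕ) : nBefore (E::w) (j+1) = nBefore w j := by
  simp [nBefore]

lemma nBefore_append_noE {m : List Step} (hm : noE m) (z : List Step) (j : ℕ) :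
    nBefore (m ++ z) j = cnt N m + nBefore z j := by
  induction m with
  | nil => simp [cnt]
  | cons a m ih =>
      have ha := hm a (by simp)
      have h' : noE m := fun s hs => hm s (by simp [hs])
      cases a
      · rw [List.cons_append, nBefore_N, ih h', cnt_cons]; simp; omega
      · exact absurd rfl ha
      · rw [List.cons_append, nBefore_D, ih h', cnt_cons]; simp
lemma nBefore_repE (r : ℕ) : ∀ j, nBefore (List.replicate r E) j = 0 := by
  induction r with
  | zero => intro j; rfl
  | succ r ih =>
      intro j
      rw [List.replicate_succ]
      cases j with
      | zero => exact nBefore_E_zero _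
      | succ j => rw [nBefore_E_succ]; exact ih j

/-! ### filter -/

lemma filter_cons_eq (a : Step) (w : List Step) :
    (a :: w).filter (fun s => s ≠ D) =
      if a = D then w.filter (fun s => s ≠ D)
      else a :: w.filter (fun s => s ≠ D) := by
  cases a <;> simp

lemma filter_noE {m : List Step} (hm : noE m) :
    m.filter (fun s => s ≠ D) = List.replicate (cnt N m) N := by
  induction m with
  | nil => simp [cnt]
  | cons a m ih =>
      have ha := hm a (by simp)
      have h' : noE m := fun s hs => hm s (by simp [hs])
      cases a
      · rw [cnt_cons, filter_cons_eq, ih h']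
        simp [List.replicate_succ]
      · exact absurd rfl ha
      · rw [cnt_cons, filter_cons_eq, ih h']
        simp

lemma filter_repE (r : ℕ) :
    (List.replicate r E).filter (fun s => s ≠ D) = List.replicate r E := by
  apply List.filter_eq_self.2
  intro a ha
  have := List.eq_of_mem_replicate ha
  simp [this]

lemma cntE_filter (w : List Step) : cnt E (w.filter (fun s => s ≠ D)) = cnt E w := by
  induction w with
  | nil => rfl
  | cons a w ih =>
      rw [filter_cons_eq]
      cases a
      · rw [if_neg (by simp), cnt_cons, cnt_cons, ih]
      · rw [if_neg (by simp), cnt_cons, cnt_cons, ih]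
      · rw [if_pos rfl, ih, cnt_cons]; simp

/-! ### areaAux -/

lemma areaAux_append_noE {m : List Step} (hm : noE m) :
    ∀ h z, areaAux h (m ++ z) = areaAux h m + areaAux (h + cnt N m) z := by
  induction m with
  | nil => intro h z; simp [cnt, areaAux]
  | cons a m ih =>
      have ha := hm a (by simp)
      have h' : noE m := fun s hs => hm s (by simp [hs])
      intro h z
      cases a
      · show h + areaAux (h+1) (m ++ z) = (h + areaAux (h+1) m) + _
        rw [ih h', cnt_cons, show h + (cnt N m + if Step.N = Step.N then 1 else 0)
            = h + 1 + cnt N m by simp; omega]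
        omega
      · exact absurd rfl ha
      · show h + areaAux h (m ++ z) = (h + areaAux h m) + _
        rw [ih h', cnt_cons, show h + (cnt N m + if Step.D = Step.N then 1 else 0)
            = h + cnt N m by simp]
        omega

lemma areaAux_repE (r : ℕ) : ∀ h, areaAux h (List.replicate r E) = 0 := by
  induction r with
  | zero => intro h; rfl
  | succ r ih => intro h; rw [List.replicate_succ]; exact ih (h-1)

lemma area_cons_D (w : List Step) : area (D::w) = area w := by simp [area, areaAux]
lemma area_cons_NE (w : List Step) : area (N::E::w) = area w := by simp [area, areaAux]

lemma area_core {c d : List Step} (hc : noE c) (hd : noE d) (r : ℕ) :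
    area (N :: (c ++ [E] ++ d ++ List.replicate r E)) =
      areaAux 1 c + areaAux (cnt N c) d := by
  have h1 : area (N :: (c ++ [E] ++ d ++ List.replicate r E)) =
      0 + areaAux 1 (c ++ [E] ++ d ++ List.replicate r E) := rfl
  have h2 : c ++ [E] ++ d ++ List.replicate r E
      = c ++ (E :: (d ++ List.replicate r E)) := by simp
  have h3 : areaAux 1 (c ++ (E :: (d ++ List.replicate r E)))
      = areaAux 1 c + areaAux (1 + cnt N c) (E :: (d ++ List.replicate r E)) :=
    areaAux_append_noE hc 1 _
  have h4 : areaAux (1 + cnt N c) (E :: (d ++ List.replicate r E))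
      = areaAux (1 + cnt N c - 1) (d ++ List.replicate r E) := rfl
  have h5 : areaAux (cnt N c) (d ++ List.replicate r E)
      = areaAux (cnt N c) d + areaAux (cnt N c + cnt N d) (List.replicate r E) :=
    areaAux_append_noE hd _ _
  rw [h1, h2, h3, h4, Nat.add_sub_cancel_left, h5, areaAux_repE]
  omega

/-! ### bounceAux -/

lemma bounceAux_succ (g w : List Step) (nn f j : ℕ) :
    bounceAux g w nn (f+1) j = dAfterE g (j+1) +
      (if nn ≤ nBefore w j ∨ nBefore w j ≤ j then 0
       else (nn - nBefore w j) + bounceAux g w nn f (nBefore w j)) := rfl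

lemma bounceAux_congr {g g' : List Step} (hg : ∀ e, dAfterE g e = dAfterE g' e)
    (w : List Step) (nn : ℕ) : ∀ f j, bounceAux g w nn f j = bounceAux g' w nn f j := by
  intro f
  induction f with
  | zero => intro j; rfl
  | succ f ih => intro j; rw [bounceAux_succ, bounceAux_succ, hg, ih]

lemma bounceAux_fuel (g w : List Step) (nn : ℕ) :
    ∀ f f' j, j < nn → nn ≤ j + f → nn ≤ j + f' →
      bounceAux g w nn f j = bounceAux g w nn f' j := by
  intro f
  induction f with
  | zero => intro f' j h1 h2 _; omega
  | succ f ih =>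
      intro f' j h1 h2 h3
      cases f' with
      | zero => omega
      | succ f' =>
          rw [bounceAux_succ, bounceAux_succ]
          by_cases hc : nn ≤ nBefore w j ∨ nBefore w j ≤ j
          · rw [if_pos hc, if_pos hc]
          · rw [if_neg hc, if_neg hc]
            push_neg at hc
            obtain ⟨hA, hB⟩ := hc
            rw [ih f' (nBefore w j) (by omega) (by omega) (by omega)]

lemma bounceAux_shift (g W : List Step) (nn : ℕ) :
    ∀ f j, bounceAux (N::E::g) (N::E::W) (nn+1) f (j+1) = bounceAux g W nn f j := by
  intro f
  induction f with
  | zero => intro j; rfl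
  | succ f ih =>
      intro j
      rw [bounceAux_succ, bounceAux_succ]
      have hd : dAfterE (N::E::g) (j+1+1) = dAfterE g (j+1) := by
        rw [dAfterE_N, dAfterE_E_succ]
      have hn : nBefore (N::E::W) (j+1) = nBefore W j + 1 := by
        rw [nBefore_N, nBefore_E_succ]; omega
      rw [hd, hn]
      have hiff : (nn+1 ≤ nBefore W j + 1 ∨ nBefore W j + 1 ≤ j+1)
          ↔ (nn ≤ nBefore W j ∨ nBefore W j ≤ j) := by omega
      rw [if_congr hiff rfl rfl]
      by_cases hc : nn ≤ nBefore W j ∨ nBefore W j ≤ j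
      · rw [if_pos hc, if_pos hc]
      · rw [if_neg hc, if_neg hc,
          show nn+1 - (nBefore W j + 1) = nn - nBefore W j by omega, ih (nBefore W j)]

/-! ### bounce recursion formulas -/

lemma bounce_unfold (g : List Step) :
    bounce g = if cnt E (g.filter (fun s => s ≠ D)) = 0 then 0
      else bounceAux g (g.filter (fun s => s ≠ D))
        (cnt E (g.filter (fun s => s ≠ D))) g.length 0 := rfl

lemma bounce_of_cntE_zero {w : List Step} (h : cnt E w = 0) : bounce w = 0 := by
  rw [bounce_unfold, if_pos (by rw [cntE_filter]; exact h)]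

lemma cntE_filter_le_length (w : List Step) :
    cnt E (w.filter (fun s => s ≠ D)) ≤ w.length :=
  le_trans List.count_le_length (List.length_filter_le _ _)

lemma bounce_cons_D (w : List Step) : bounce (D::w) = bounce w := by
  rw [bounce_unfold, bounce_unfold,
    show (D::w).filter (fun s => s ≠ D) = w.filter (fun s => s ≠ D) by
      rw [filter_cons_eq, if_pos rfl]]
  by_cases h : cnt E (w.filter (fun s => s ≠ D)) = 0
  · rw [if_pos h, if_pos h]
  · rw [if_neg h, if_neg h, List.length_cons,
      bounceAux_congr (fun e => dAfterE_D w e) _ _ _ _]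
    exact bounceAux_fuel _ _ _ _ _ 0 (by omega)
      (by have := cntE_filter_le_length w; omega)
      (by have := cntE_filter_le_length w; omega)

lemma bounce_cons_NE (w : List Step) :
    bounce (N::E::w) = cnt D w + (if cnt E w = 0 then 0 else cnt E w + bounce w) := by
  have hf : (N::E::w).filter (fun s => s ≠ D) = N::E::(w.filter (fun s => s ≠ D)) := by
    rw [filter_cons_eq, if_neg (by simp), filter_cons_eq, if_neg (by simp)]
  have hcnt : cnt E (w.filter (fun s => s ≠ D)) = cnt E w := cntE_filter w
  have hc2 : cnt E (N::E::(w.filter (fun s => s ≠ D))) = cnt E w + 1 := by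
    rw [cnt_cons, cnt_cons, hcnt]; simp
  rw [bounce_unfold, hf, hc2, if_neg (by omega)]
  rw [show (N::E::w).length = (w.length + 1) + 1 by simp]
  rw [bounceAux_succ]
  simp only [Nat.zero_add]
  rw [dAfterE_N, dAfterE_E_one,
    show nBefore (N::E::(w.filter (fun s => s ≠ D))) 0 = 1 by rw [nBefore_N, nBefore_E_zero]]
  by_cases h : cnt E w = 0
  · rw [if_pos (Or.inl (by omega)), if_pos h]
  · rw [if_neg (by omega), if_neg h]
    have hs := bounceAux_shift w (w.filter (fun s => s ≠ D)) (cnt E w) (w.length+1) 0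
    simp only [Nat.zero_add] at hs
    rw [hs, bounceAux_fuel w _ (cnt E w) (w.length+1) w.length 0 (by omega)
      (by have h2 := cntE_filter_le_length w; omega)
      (by have h2 := cntE_filter_le_length w; omega)]
    have hb : bounce w = bounceAux w (w.filter (fun s => s ≠ D)) (cnt E w) w.length 0 := by
      rw [bounce_unfold, if_neg (by omega), hcnt]
    omega

lemma noE_repN (k : ℕ) : noE (List.replicate k N) := by
  intro s hs
  rw [List.eq_of_mem_replicate hs]
  simp

lemma bounce_core {c d : List Step} (hc : noE c) (hd : noE d) :
    bounce (N :: (c ++ [E] ++ d ++ List.replicate (cnt N c + cnt N d) E)) = d.length := by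
  set p := cnt N c with hp
  set q := cnt N d with hq
  set w0 := N :: (c ++ [E] ++ d ++ List.replicate (p+q) E) with hw0
  have hrw : c ++ [E] ++ d ++ List.replicate (p+q) E
      = c ++ ([E] ++ (d ++ List.replicate (p+q) E)) := by simp
  have hfe : [E].filter (fun s => s ≠ D) = [E] := by
    rw [filter_cons_eq, if_neg (by simp)]; rfl
  have hf : w0.filter (fun s => s ≠ D)
      = N :: (List.replicate p N ++ ([E] ++ (List.replicate q N ++ List.replicate (p+q) E))) := by
    rw [hw0, filter_cons_eq, if_neg (by simp), hrw, List.filter_append, List.filter_append,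
      List.filter_append, filter_noE hc, filter_noE hd, filter_repE, hfe]
    try simp
  set W := N :: (List.replicate p N ++ ([E] ++ (List.replicate q N ++ List.replicate (p+q) E)))
    with hWdef
  have hnn : cnt E W = (p+q) + 1 := by
    rw [hWdef, cnt_cons, cnt_append, cnt_append, cnt_append, cnt_rep, cnt_rep, cnt_rep]
    simp [cnt_cons, cnt]
    omega
  have hnb0 : nBefore W 0 = p + 1 := by
    rw [hWdef, nBefore_N, nBefore_append_noE (noE_repN p),
      show ([E] ++ (List.replicate q N ++ List.replicate (p+q) E))
        = E :: (List.replicate q N ++ List.replicate (p+q) E) by rfl,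
      nBefore_E_zero, cnt_rep]
    simp
    omega
  have hnb1 : nBefore W (p+1) = (p+q) + 1 := by
    rw [hWdef, nBefore_N, nBefore_append_noE (noE_repN p),
      show ([E] ++ (List.replicate q N ++ List.replicate (p+q) E))
        = E :: (List.replicate q N ++ List.replicate (p+q) E) by rfl,
      nBefore_E_succ, nBefore_append_noE (noE_repN q), nBefore_repE, cnt_rep, cnt_rep]
    simp
    omega
  have hd1 : dAfterE w0 1 = cnt D d := by
    rw [hw0, dAfterE_N, hrw, dAfterE_append_noE hc,
      show ([E] ++ (d ++ List.replicate (p+q) E)) = E :: (d ++ List.replicate (p+q) E) by rfl,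
      dAfterE_E_one, cnt_append, cnt_rep]
    simp
  have hd2 : dAfterE w0 (p+1+1) = 0 := by
    rw [hw0, dAfterE_N, hrw, dAfterE_append_noE hc,
      show ([E] ++ (d ++ List.replicate (p+q) E)) = E :: (d ++ List.replicate (p+q) E) by rfl,
      dAfterE_E_succ, dAfterE_append_noE hd, dAfterE_repE]
  have hlen : (p+q) + 1 ≤ w0.length := by
    rw [hw0]
    simp only [List.length_cons, List.length_append, List.length_replicate]
    omega
  rw [bounce_unfold, hf, hnn, if_neg (by omega)]
  rw [bounceAux_fuel w0 W ((p+q)+1) w0.length (((p+q)+1)+1) 0 (by omega) (by omega) (by omega)]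
  rw [bounceAux_succ]
  simp only [Nat.zero_add]
  rw [hd1, hnb0]
  have hlend := length_noE hd
  by_cases hq0 : q = 0
  · rw [if_pos (Or.inl (by omega))]
    omega
  · rw [if_neg (by omega), bounceAux_succ, hd2, hnb1, if_pos (Or.inl le_rfl)]
    omega

/-! ### the invariant class -/

inductive Form : List Step → Prop
  | nil : Form []
  | dd {w} : Form w → Form (D :: w)
  | ne {w} : Form w → Form (N :: E :: w)
  | core (c d : List Step) (hc : noE c) (hd : noE d) :
      Form (N :: (c ++ [E] ++ d ++ List.replicate (cnt N c + cnt N d) E))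

lemma form_of_isNED {g : List Step} (h : IsNED g) : Form g := by
  induction h with
  | nil => exact Form.nil
  | ne _ ih => exact Form.ne ih
  | d _ ih => exact Form.dd ih

lemma area_of_isNED {g : List Step} (h : IsNED g) : area g = 0 := by
  induction h with
  | nil => rfl
  | ne _ ih => rw [area_cons_NE]; exact ih
  | d _ ih => rw [area_cons_D]; exact ih

lemma cntE_noE {m : List Step} (hm : noE m) : cnt E m = 0 :=
  List.count_eq_zero.mpr (fun hmem => hm E hmem rfl)

lemma cntN_eq_cntE_of_form {w : List Step} (h : Form w) : cnt N w = cnt E w := by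
  induction h with
  | nil => rfl
  | dd _ ih => rw [cnt_cons, cnt_cons]; simp; exact ih
  | ne _ ih => rw [cnt_cons, cnt_cons, cnt_cons, cnt_cons]; simp; omega
  | core c d hc hd =>
      have h1 := cntE_noE hc
      have h2 := cntE_noE hd
      rw [cnt_cons, cnt_cons, cnt_append, cnt_append, cnt_append, cnt_append, cnt_append,
        cnt_append, cnt_rep, cnt_rep]
      simp [cnt_cons, cnt] at h1 h2 ⊢
      omega

lemma length_decomp (w : List Step) : w.length = cnt N w + cnt E w + cnt D w := by
  induction w with
  | nil => rfl
  | cons a w ih =>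
      rw [List.length_cons, cnt_cons, cnt_cons, cnt_cons, ih]
      cases a <;> simp <;> omega

lemma nopat {w : List Step} (h : Form w) (hb : bounce w = 0) :
    ∃ m s, noE m ∧ cnt N m = s ∧ w = m ++ List.replicate s E := by
  induction h with
  | nil => exact ⟨[], 0, fun s hs => absurd hs List.not_mem_nil, rfl, rfl⟩
  | @dd w' hw ih =>
      rw [bounce_cons_D] at hb
      obtain ⟨m, s, h1, h2, h3⟩ := ih hb
      refine ⟨D::m, s, ?_, ?_, ?_⟩
      · intro t ht
        rcases List.mem_cons.mp ht with h | h
        · subst h; simp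
        · exact h1 t h
      · rw [cnt_cons, h2]; simp
      · rw [h3]; rfl
  | @ne w' hw ih =>
      rw [bounce_cons_NE] at hb
      have hE : cnt E w' = 0 := by
        by_contra hne; rw [if_neg hne] at hb; omega
      have hD : cnt D w' = 0 := by rw [if_pos hE] at hb; omega
      have hN : cnt N w' = 0 := by rw [cntN_eq_cntE_of_form hw, hE]
      have hnil : w' = [] := by
        have := length_decomp w'
        exact List.eq_nil_of_length_eq_zero (by omega)
      subst hnil
      refine ⟨[N], 1, ?_, by simp [cnt_cons, cnt], by simp [List.replicate]⟩
      intro t ht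
      rcases List.mem_cons.mp ht with h | h
      · subst h; simp
      · exact absurd h List.not_mem_nil
  | core c d hc hd =>
      rw [bounce_core hc hd] at hb
      have hd0 : d = [] := List.length_eq_zero_iff.mp hb
      subst hd0
      refine ⟨N::c, cnt N c + 1, ?_, ?_, ?_⟩
      · intro t ht
        rcases List.mem_cons.mp ht with h | h
        · subst h; simp
        · exact hc t h
      · rw [cnt_cons]; simp
      · show N :: (c ++ [E] ++ [] ++ List.replicate (cnt N c + cnt N ([] : List Step)) E) = _
        rw [show cnt N ([] : List Step) = 0 from rfl]
        simp [List.replicate_succ]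

/-! ### computing phi -/

lemma phiRevAux_swap (a : Step) (ha : a ≠ E) (t : List Step) :
    phiRevAux (a :: E :: t) = E :: a :: t := by
  cases a
  · simp [phiRevAux]
  · exact absurd rfl ha
  · simp [phiRevAux]

lemma phiRevAux_cons_nonE_cons (a b : Step) (hb : b ≠ E) (t : List Step) :
    phiRevAux (a :: b :: t) = a :: phiRevAux (b :: t) := by
  cases b
  · rfl
  · exact absurd rfl hb
  · rfl

lemma phiRevAux_E_E (t : List Step) : phiRevAux (E :: E :: t) = E :: phiRevAux (E :: t) := by
  simp [phiRevAux]

lemma phicomp0 : ∀ (m : List Step), noE m → ∀ x, x ≠ E → ∀ z,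
    phiRevAux (m ++ x :: E :: z) = m ++ E :: x :: z := by
  intro m
  induction m with
  | nil => intro _ x hx z; simpa using phiRevAux_swap x hx z
  | cons a m ih =>
      intro hm x hx z
      have h' : noE m := fun s hs => hm s (by simp [hs])
      rw [List.cons_append, List.cons_append]
      cases m with
      | nil =>
          rw [show ([] : List Step) ++ x :: E :: z = x :: E :: z from rfl,
            phiRevAux_cons_nonE_cons a x hx, phiRevAux_swap x hx]
          simpa using (ih h' x hx z)
      | cons b m' =>
          have hb : b ≠ E := h' b (by simp)
          rw [show (b :: m') ++ x :: E :: z = b :: (m' ++ x :: E :: z) from rfl,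
            phiRevAux_cons_nonE_cons a b hb]
          have := ih h' x hx z
          rw [List.cons_append] at this
          rw [this]

lemma phicompR (x : Step) (hx : x ≠ E) :
    ∀ r (m : List Step), noE m → ∀ z,
    phiRevAux (List.replicate r E ++ (m ++ x :: E :: z))
      = List.replicate r E ++ (m ++ E :: x :: z) := by
  intro r
  induction r with
  | zero => intro m hm z; simpa using phicomp0 m hm x hx z
  | succ r ih =>
      intro m hm z
      rw [List.replicate_succ, List.cons_append]
      have key : phiRevAux (E :: (List.replicate r E ++ (m ++ x :: E :: z)))
          = E :: phiRevAux (List.replicate r E ++ (m ++ x :: E :: z)) := by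
        cases r with
        | zero =>
            cases m with
            | nil =>
                simp only [List.replicate, List.nil_append]
                exact phiRevAux_cons_nonE_cons E x hx _
            | cons b m' =>
                simp only [List.replicate, List.nil_append, List.cons_append]
                exact phiRevAux_cons_nonE_cons E b (hm b (by simp)) _
        | succ r' =>
            rw [List.replicate_succ, List.cons_append]
            exact phiRevAux_E_E _
      rw [key, ih m hm z, List.cons_append]

lemma phiStep_of_decomp {w z : List Step} {x : Step} (hx : x ≠ E)
    {r : ℕ} {m : List Step} (hm : noE m)
    (hu : w.reverse = List.replicate r E ++ (m ++ x :: E :: z)) :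
    phiStep w = (List.replicate r E ++ (m ++ E :: x :: z)).reverse := by
  rw [phiStep, hu, phicompR x hx r m hm z]

/-! ### the step lemma -/

lemma areaAux_cons_N (h : ℕ) (t : List Step) : areaAux h (N::t) = h + areaAux (h+1) t := rfl
lemma areaAux_cons_D (h : ℕ) (t : List Step) : areaAux h (D::t) = h + areaAux h t := rfl
lemma areaAux_singleton_N (h : ℕ) : areaAux h [N] = h := by simp [areaAux]
lemma areaAux_singleton_D (h : ℕ) : areaAux h [D] = h := by simp [areaAux]

lemma cnt_swap_pair (s x : Step) (z : List Step) (r : ℕ) (m : List Step) :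
    cnt s ((List.replicate r E ++ (m ++ E :: x :: z)).reverse)
      = cnt s ((List.replicate r E ++ (m ++ x :: E :: z)).reverse) := by
  simp only [cnt, List.count_reverse, List.count_append, List.count_cons]
  ring

lemma step : ∀ {w : List Step}, Form w → 0 < bounce w →
    ∃ (r : ℕ) (m : List Step) (x : Step) (z : List Step),
      noE m ∧ x ≠ E ∧ w.reverse = List.replicate r E ++ (m ++ x :: E :: z) ∧
      Form ((List.replicate r E ++ (m ++ E :: x :: z)).reverse) ∧
      bounce ((List.replicate r E ++ (m ++ E :: x :: z)).reverse) + 1 = bounce w ∧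
      area ((List.replicate r E ++ (m ++ E :: x :: z)).reverse) = area w + 1 := by
  intro w hw
  induction hw with
  | nil =>
      intro hb
      rw [bounce_of_cntE_zero (show cnt E ([] : List Step) = 0 from rfl)] at hb
      exact absurd hb (lt_irrefl 0)
  | @dd w' hw ih =>
      intro hb
      rw [bounce_cons_D] at hb
      obtain ⟨r, m, x, z, h1, h2, h3, h4, h5, h6⟩ := ih hb
      have keyr : (List.replicate r E ++ (m ++ E :: x :: (z ++ [D]))).reverse
          = D :: (List.replicate r E ++ (m ++ E :: x :: z)).reverse := by simp
      refine ⟨r, m, x, z ++ [D], h1, h2, ?_, ?_, ?_, ?_⟩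
      · rw [List.reverse_cons, h3]; simp
      · rw [keyr]; exact Form.dd h4
      · rw [keyr, bounce_cons_D, bounce_cons_D]; exact h5
      · rw [keyr, area_cons_D, area_cons_D]; exact h6
  | @ne w' hw ih =>
      intro hb
      by_cases hb' : 0 < bounce w'
      · obtain ⟨r, m, x, z, h1, h2, h3, h4, h5, h6⟩ := ih hb'
        have keyr : (List.replicate r E ++ (m ++ E :: x :: (z ++ [E, N]))).reverse
            = N :: E :: (List.replicate r E ++ (m ++ E :: x :: z)).reverse := by simp
        have hEw' : cnt E w' ≠ 0 := fun hc => by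
          rw [bounce_of_cntE_zero hc] at hb'; exact absurd hb' (lt_irrefl 0)
        have hcD : cnt D ((List.replicate r E ++ (m ++ E :: x :: z)).reverse) = cnt D w' := by
          rw [cnt_swap_pair, ← h3, List.reverse_reverse]
        have hcE : cnt E ((List.replicate r E ++ (m ++ E :: x :: z)).reverse) = cnt E w' := by
          rw [cnt_swap_pair, ← h3, List.reverse_reverse]
        refine ⟨r, m, x, z ++ [E, N], h1, h2, ?_, ?_, ?_, ?_⟩
        · rw [List.reverse_cons, List.reverse_cons, h3]; simp
        · rw [keyr]; exact Form.ne h4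
        · rw [keyr, bounce_cons_NE, bounce_cons_NE, hcD, hcE, if_neg hEw', if_neg hEw']
          omega
        · rw [keyr, area_cons_NE, area_cons_NE]; exact h6
      · have hb0 : bounce w' = 0 := by omega
        obtain ⟨m, s, hm, hms, hw'eq⟩ := nopat hw hb0
        cases m with
        | nil =>
            exfalso
            have hs0 : s = 0 := by rw [← hms]; rfl
            subst hs0
            have hnil : w' = [] := by rw [hw'eq]; rfl
            rw [hnil, bounce_cons_NE] at hb
            simp [cnt] at hb
        | cons y m₀ =>
            have hy : y ≠ E := hm y (by simp)
            have hm₀ : noE m₀ := fun t ht => hm t (by simp [ht])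
            have hm₀r : noE m₀.reverse := fun t ht => hm₀ t (List.mem_reverse.mp ht)
            have hys : noE [y] := by
              intro t ht; rw [List.mem_singleton.mp ht]; exact hy
            have hs2 : cnt N [y] + cnt N m₀ = s := by
              rw [← hms, cnt_cons, cnt_cons]
              simp [cnt]
              omega
            have keyr : (List.replicate s E ++ (m₀.reverse ++ E :: y :: [N])).reverse
                = N :: ([y] ++ [E] ++ m₀ ++ List.replicate s E) := by simp
            have hcEw' : cnt E w' = s := by
              rw [hw'eq, cnt_append, cntE_noE hm, cnt_rep]; simp
            have hcDw' : cnt D w' = cnt D (y::m₀) := by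
              rw [hw'eq, cnt_append, cnt_rep]; simp
            refine ⟨s, m₀.reverse, y, [N], hm₀r, hy, ?_, ?_, ?_, ?_⟩
            · rw [List.reverse_cons, List.reverse_cons, hw'eq]; simp
            · rw [keyr, ← hs2]; exact Form.core [y] m₀ hys hm₀
            · rw [keyr, ← hs2, bounce_core hys hm₀]
              have hRHS : bounce (N :: E :: w') = cnt D (y::m₀) + s := by
                rw [bounce_cons_NE, hcEw', hcDw', hb0]
                by_cases hs0 : s = 0
                · rw [if_pos hs0]; omega
                · rw [if_neg hs0]; omega
              rw [hRHS]
              have hlm := length_noE hm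
              rw [List.length_cons] at hlm
              omega
            · rw [keyr, area_core hys hm₀ s]
              have h7 : area (N :: E :: w') = areaAux 0 (y::m₀) := by
                rw [area_cons_NE, hw'eq]
                show areaAux 0 ((y::m₀) ++ List.replicate s E) = _
                rw [areaAux_append_noE hm, areaAux_repE]
                omega
              rw [h7]
              cases y
              · have hc1 : cnt N [N] = 1 := by simp [cnt]
                rw [areaAux_singleton_N, areaAux_cons_N, hc1]
                simp only [Nat.zero_add]
                omega
              · exact absurd rfl hy
              · have hc0 : cnt N [D] = 0 := by simp [cnt]
                rw [areaAux_singleton_D, areaAux_cons_D, hc0]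
                simp only [Nat.zero_add]
                omega
  | core c d hc hd =>
      intro hb
      rw [bounce_core hc hd] at hb
      cases d with
      | nil => simp at hb
      | cons e d' =>
          have he : e ≠ E := hd e (by simp)
          have hd' : noE d' := fun t ht => hd t (by simp [ht])
          have hd'r : noE d'.reverse := fun t ht => hd' t (List.mem_reverse.mp ht)
          have hce : noE (c ++ [e]) := by
            intro t ht
            rcases List.mem_append.mp ht with h | h
            · exact hc t h
            · rw [List.mem_singleton.mp h]; exact he
          have hR' : cnt N (c ++ [e]) + cnt N d' = cnt N c + cnt N (e::d') := by
            rw [cnt_append, cnt_cons, cnt_cons]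
            have h0 : cnt N ([] : List Step) = 0 := rfl
            omega
          have hdec : (N :: (c ++ [E] ++ (e::d') ++ List.replicate (cnt N c + cnt N (e::d')) E)).reverse
              = List.replicate (cnt N c + cnt N (e::d')) E
                ++ (d'.reverse ++ e :: E :: (c.reverse ++ [N])) := by simp
          have keyr : (List.replicate (cnt N c + cnt N (e::d')) E
                ++ (d'.reverse ++ E :: e :: (c.reverse ++ [N]))).reverse
              = N :: ((c ++ [e]) ++ [E] ++ d' ++ List.replicate (cnt N c + cnt N (e::d')) E) := by
            simp
          refine ⟨cnt N c + cnt N (e::d'), d'.reverse, e, c.reverse ++ [N], hd'r, he, hdec,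
            ?_, ?_, ?_⟩
          · rw [keyr, ← hR']; exact Form.core (c ++ [e]) d' hce hd'
          · have hRHS : bounce (N :: (c ++ [E] ++ (e::d')
                ++ List.replicate (cnt N c + cnt N (e::d')) E)) = d'.length + 1 := by
              rw [bounce_core hc hd, List.length_cons]
            rw [hRHS, keyr, ← hR', bounce_core hce hd']
          · rw [keyr, area_core hce hd' _, area_core hc hd _]
            have h8 : areaAux 1 (c ++ [e]) = areaAux 1 c + areaAux (1 + cnt N c) [e] :=
              areaAux_append_noE hc 1 [e]
            cases e
            · have h9 : cnt N (c ++ [N]) = cnt N c + 1 := by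
                rw [cnt_append]; simp [cnt]
              rw [h8, h9, areaAux_singleton_N, areaAux_cons_N]
              omega
            · exact absurd rfl he
            · have h9 : cnt N (c ++ [D]) = cnt N c := by
                rw [cnt_append]; simp [cnt]
              rw [h8, h9, areaAux_singleton_D, areaAux_cons_D]
              omega

/-! ### the orbit -/

lemma orbit {g : List Step} (hg : Form g) (ha : area g = 0) :
    ∀ i, i ≤ bounce g → Form (phiStep^[i] g) ∧ bounce (phiStep^[i] g) + i = bounce g ∧
      area (phiStep^[i] g) = i := by
  intro i
  induction i with
  | zero =>
      intro _
      simp only [Function.iterate_zero_apply]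
      exact ⟨hg, by omega, ha⟩
  | succ i ih =>
      intro hi
      obtain ⟨h1, h2, h3⟩ := ih (by omega)
      have hbpos : 0 < bounce (phiStep^[i] g) := by omega
      obtain ⟨r, m, x, z, hm, hx, hdec, h4, h5, h6⟩ := step h1 hbpos
      have hphi := phiStep_of_decomp hx hm hdec
      rw [Function.iterate_succ_apply', hphi]
      exact ⟨h4, by omega, by omega⟩

end Stmt6Aux

/-- For `γ ∈ {NE,D}*` with `φ(γ) = (γ₀, …, γ_b)`, `b = bounce(γ)`:
for all `0 ≤ i < b`, `area(γ_{i+1}) = area(γᵢ) + 1`, `bounce(γ_{i+1}) = bounce(γᵢ) - 1`,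
`area(γᵢ) = bounce(γ_{b-i})` and `bounce(γᵢ) = area(γ_{b-i})`. -/
theorem stmt6 (g : List Step) (h : IsNED g) :
    ∀ i < bounce g,
      area (phiStep^[i+1] g) = area (phiStep^[i] g) + 1 ∧
      bounce (phiStep^[i+1] g) = bounce (phiStep^[i] g) - 1 ∧
      area (phiStep^[i] g) = bounce (phiStep^[bounce g - i] g) ∧
      bounce (phiStep^[i] g) = area (phiStep^[bounce g - i] g) := by
  intro i hi
  have hg := Stmt6Aux.form_of_isNED h
  have ha := Stmt6Aux.area_of_isNED h
  obtain ⟨_, hb1, ha1⟩ := Stmt6Aux.orbit hg ha i (le_of_lt hi)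
  obtain ⟨_, hb2, ha2⟩ := Stmt6Aux.orbit hg ha (i+1) (by omega)
  obtain ⟨_, hb3, ha3⟩ := Stmt6Aux.orbit hg ha (bounce g - i) (by omega)
  exact ⟨by omega, by omega, by omega, by omega⟩
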